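/- For all integers n ≥ 2, a, b ≥ 0 and 0 < r < n, the following identity holds in ℚ: ((a+b+n)/(a+r)) · C(b+n−r−1,b) · C(b+n−1,r−1) · C(a+n−1,a) = ((a+b+n) r / ((a+r)(b+n−r))) · C(n−1,r) · C(a+n−1,a) · C(b+n−1,b), where C(·,·) denotes the binomial coefficient. -/

import Mathlib

open Nat

lemma key (b m s : ℕ) :
    ((b:ℚ)+m+1) * (Nat.choose (b+m) b : ℚ) * (Nat.choose (b+s+1+m) s : ℚ)
      = ((s:ℚ)+1) * (Nat.choose (s+1+m) (s+1) : ℚ) * (Nat.choose (b+s+1+m) b : ℚ) := by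
  have h1 : (Nat.choose (b+m) b : ℚ) = (b+m) ! / (b ! * m !) := by
    rw [Nat.cast_choose ℚ (by omega), show b+m-b = m by omega]
  have h2 : (Nat.choose (b+s+1+m) s : ℚ) = (b+s+1+m) ! / (s ! * (b+m+1) !) := by
    rw [Nat.cast_choose ℚ (by omega), show b+s+1+m-s = b+m+1 by omega]
  have h3 : (Nat.choose (s+1+m) (s+1) : ℚ) = (s+1+m) ! / ((s+1) ! * m !) := by
    rw [Nat.cast_choose ℚ (by omega), show s+1+m-(s+1) = m by omega]
  have h4 : (Nat.choose (b+s+1+m) b : ℚ) = (b+s+1+m) ! / (b ! * (s+1+m) !) := by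
    rw [Nat.cast_choose ℚ (by omega), show b+s+1+m-b = s+1+m by omega]
  rw [h1, h2, h3, h4]
  have e1 : ((b+m+1) ! : ℚ) = ((b:ℚ)+m+1) * (b+m) ! := by
    rw [show b+m+1 = (b+m)+1 from rfl, Nat.factorial_succ]; push_cast; ring
  have e2 : ((s+1) ! : ℚ) = ((s:ℚ)+1) * s ! := by
    rw [Nat.factorial_succ]; push_cast; ring
  have f : ∀ k : ℕ, (k ! : ℚ) ≠ 0 := fun k => by positivity
  rw [e1, e2]
  field_simp

/-- **Agreement of the Weyl dimension formula with the CK dimension formula** for the spaces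
of spherical Hermitean monogenics:
`((a+b+n)/(a+r)) C(b+n-r-1,b) C(b+n-1,r-1) C(a+n-1,a)
  = ((a+b+n) r / ((a+r)(b+n-r))) C(n-1,r) C(a+n-1,a) C(b+n-1,b)`. -/
theorem weyl_eq_ck_dimension (n a b r : ℕ) (hn : 2 ≤ n) (hr0 : 0 < r) (hrn : r < n) :
    ((a : ℚ) + b + n) / ((a : ℚ) + r) * (Nat.choose (b + n - r - 1) b : ℚ) *
        (Nat.choose (b + n - 1) (r - 1) : ℚ) * (Nat.choose (a + n - 1) a : ℚ) =
    ((a : ℚ) + b + n) * r / (((a : ℚ) + r) * ((b : ℚ) + n - r)) *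
      (Nat.choose (n - 1) r : ℚ) * (Nat.choose (a + n - 1) a : ℚ) *
      (Nat.choose (b + n - 1) b : ℚ) := by
  obtain ⟨s, rfl⟩ : ∃ s, r = s + 1 := ⟨r - 1, by omega⟩
  obtain ⟨m, rfl⟩ : ∃ m, n = s + 1 + m + 1 := ⟨n - s - 2, by omega⟩
  rw [show b + (s+1+m+1) - (s+1) - 1 = b + m by omega,
      show b + (s+1+m+1) - 1 = b + s + 1 + m by omega,
      show s + 1 - 1 = s by omega,
      show s + 1 + m + 1 - 1 = s + 1 + m by omega]
  rw [show a + (s+1+m+1) - 1 = a + (s+1+m) by omega]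
  have hk := key b m s
  have h1 : (a:ℚ) + ((s:ℚ)+1) ≠ 0 := by positivity
  have h2 : (b:ℚ) + m + 1 ≠ 0 := by positivity
  push_cast
  have h3 : (b:ℚ) + ((s:ℚ)+1+m+1) - ((s:ℚ)+1) = (b:ℚ) + m + 1 := by ring
  rw [h3]
  field_simp
  linear_combination (Nat.choose (a + (s + 1 + m)) a : ℚ) * hk
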